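/- Let p and q be monic real-rooted polynomials of degree n whose roots λ_1 > λ_2 > … > λ_n (of p) and μ_1 > μ_2 > … > μ_n (of q) are all simple, pairwise distinct (λ_i ≠ μ_i for all i), and such that p and q have a common interlacer. If the root vector of p majorizes the root vector of q, then for every k with 1 ≤ k < n one has Σ_{i=1}^{k} p(μ_i)/q'(μ_i) < 0. -/

import Mathlib

open Polynomial Finset

namespace NCM

variable {n : ℕ}


noncomputable def w (lam mu : Fin n → ℝ) (i : Fin n) : ℝ :=
  ∏ j ∈ univ.erase i, (mu i - lam j) / (mu i - mu j)

noncomputable def P (d : Fin n → ℝ) (k : ℕ) : ℝ :=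
  ∑ i ∈ univ.filter (fun i : Fin n => (i : ℕ) < k), d i

noncomputable def T (lam mu : Fin n → ℝ) (k : ℕ) : ℝ :=
  ∑ i ∈ univ.filter (fun i : Fin n => (i : ℕ) < k), (lam i - mu i) * w lam mu i

def H1 (lam mu : Fin n → ℝ) : Prop :=
  ∀ i j : Fin n, i < j → max (lam j) (mu j) < min (lam i) (mu i)

lemma filter_lt_succ (k : ℕ) (hk : k < n) :
    (univ.filter (fun i : Fin n => (i : ℕ) < k + 1))
      = insert ⟨k, hk⟩ (univ.filter (fun i : Fin n => (i : ℕ) < k)) := by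
  ext i
  simp only [mem_filter, mem_univ, true_and, mem_insert, Nat.lt_succ_iff]
  constructor
  · intro h
    rcases eq_or_lt_of_le h with h' | h'
    · exact Or.inl (Fin.ext h')
    · exact Or.inr h'
  · rintro (rfl | h)
    · rfl
    · exact le_of_lt h

lemma sum_filter_succ (f : Fin n → ℝ) (k : ℕ) (hk : k < n) :
    ∑ i ∈ univ.filter (fun i : Fin n => (i : ℕ) < k + 1), f i
      = (∑ i ∈ univ.filter (fun i : Fin n => (i : ℕ) < k), f i) + f ⟨k, hk⟩ := by
  rw [filter_lt_succ k hk, Finset.sum_insert (by simp), add_comm]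

lemma filter_eq_univ_of_le (k : ℕ) (hk : n ≤ k) :
    (univ.filter (fun i : Fin n => (i : ℕ) < k)) = (univ : Finset (Fin n)) := by
  apply Finset.filter_true_of_mem
  intro i _
  exact lt_of_lt_of_le i.isLt hk

lemma H1.mu_lt {lam mu : Fin n → ℝ} (h : H1 lam mu) {i j : Fin n} (hij : i < j) :
    mu j < mu i :=
  lt_of_le_of_lt (le_max_right _ _) (lt_of_lt_of_le (h i j hij) (min_le_right _ _))

lemma H1.mu_anti {lam mu : Fin n → ℝ} (h : H1 lam mu) : StrictAnti mu :=
  fun _ _ hij => h.mu_lt hij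

lemma H1.mu_sub_lam_pos {lam mu : Fin n → ℝ} (h : H1 lam mu) {i j : Fin n} (hij : i < j) :
    0 < mu i - lam j := by
  have := lt_of_le_of_lt (le_max_left (lam j) (mu j))
    (lt_of_lt_of_le (h i j hij) (min_le_right _ _))
  linarith

lemma H1.lam_sub_mu_pos {lam mu : Fin n → ℝ} (h : H1 lam mu) {i j : Fin n} (hij : i < j) :
    0 < lam i - mu j := by
  have := lt_of_le_of_lt (le_max_right (lam j) (mu j))
    (lt_of_lt_of_le (h i j hij) (min_le_left _ _))
  linarith

lemma H1.lam_sub_lam_pos {lam mu : Fin n → ℝ} (h : H1 lam mu) {i j : Fin n} (hij : i < j) :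
    0 < lam i - lam j := by
  have := lt_of_le_of_lt (le_max_left (lam j) (mu j))
    (lt_of_lt_of_le (h i j hij) (min_le_left _ _))
  linarith

lemma w_pos {lam mu : Fin n → ℝ} (h : H1 lam mu) (i : Fin n) : 0 < w lam mu i := by
  apply Finset.prod_pos
  intro j hj
  have hji : j ≠ i := (Finset.mem_erase.mp hj).1
  rcases lt_or_gt_of_ne hji with hlt | hgt
  · -- j < i : both numerator and denominator negative
    have h1 : 0 < mu j - lam i → True := fun _ => trivial
    have hnum : mu i - lam j < 0 := by
      have := h.lam_sub_mu_pos hlt; linarith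
    have hden : mu i - mu j < 0 := by
      have := h.mu_lt hlt; linarith
    exact div_pos_of_neg_of_neg hnum hden
  · -- i < j : both positive
    exact div_pos (h.mu_sub_lam_pos hgt) (by have := h.mu_lt hgt; linarith)

lemma abel_ge (a κ : Fin n → ℝ) (k : ℕ) (hk : k ≤ n)
    (hA : ∀ j : ℕ, j ≤ k → 0 ≤ ∑ i ∈ univ.filter (fun i : Fin n => (i : ℕ) < j), a i)
    (hmono : ∀ i j : Fin n, i ≤ j → (j : ℕ) < k → κ j ≤ κ i)
    (c : ℝ) (hc : 0 ≤ c) (hcκ : ∀ i : Fin n, (i : ℕ) < k → c ≤ κ i) :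
    c * (∑ i ∈ univ.filter (fun i : Fin n => (i : ℕ) < k), a i)
      ≤ ∑ i ∈ univ.filter (fun i : Fin n => (i : ℕ) < k), a i * κ i := by
  induction k generalizing c with
  | zero => simp
  | succ k ih =>
    have hk' : k < n := Nat.lt_of_succ_le hk
    set K : Fin n := ⟨k, hk'⟩ with hK
    have hKlt : (K : ℕ) < k + 1 := Nat.lt_succ_self k
    have hcK : c ≤ κ K := hcκ K hKlt
    have hκK : 0 ≤ κ K := le_trans hc hcK
    have ih' : κ K * (∑ i ∈ univ.filter (fun i : Fin n => (i : ℕ) < k), a i)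
        ≤ ∑ i ∈ univ.filter (fun i : Fin n => (i : ℕ) < k), a i * κ i := by
      apply ih (le_of_lt hk')
        (fun j hj => hA j (le_trans hj (Nat.le_succ k)))
        (fun i j hij hj => hmono i j hij (lt_trans hj (Nat.lt_succ_self k)))
        (κ K) hκK
      intro i hi
      exact hmono i K (Fin.le_def.mpr (le_of_lt hi)) hKlt
    rw [sum_filter_succ a k hk', sum_filter_succ (fun i => a i * κ i) k hk']
    have hAk1 : 0 ≤ (∑ i ∈ univ.filter (fun i : Fin n => (i : ℕ) < k), a i) + a K := by
      have := hA (k+1) le_rfl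
      rwa [sum_filter_succ a k hk'] at this
    calc c * ((∑ i ∈ univ.filter (fun i : Fin n => (i : ℕ) < k), a i) + a K)
        ≤ κ K * ((∑ i ∈ univ.filter (fun i : Fin n => (i : ℕ) < k), a i) + a K) :=
          mul_le_mul_of_nonneg_right hcK hAk1
      _ = κ K * (∑ i ∈ univ.filter (fun i : Fin n => (i : ℕ) < k), a i) + a K * κ K := by ring
      _ ≤ (∑ i ∈ univ.filter (fun i : Fin n => (i : ℕ) < k), a i * κ i) + a K * κ K := by
          linarith [ih']

lemma eval_prod_X_sub_C (lam : Fin n → ℝ) (x : ℝ) :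
    (∏ i, (X - C (lam i))).eval x = ∏ i, (x - lam i) := by
  rw [eval_prod]
  exact Finset.prod_congr rfl (fun i _ => by simp)

lemma q_eval_zero (mu : Fin n → ℝ) (i : Fin n) :
    (∏ j, (X - C (mu j))).eval (mu i) = 0 := by
  rw [eval_prod_X_sub_C]
  exact Finset.prod_eq_zero (mem_univ i) (by ring)

/-- The key residue identity `∑ᵢ dᵢ wᵢ = ∑ᵢ dᵢ`. -/
lemma sum_dw_eq_sum_d (lam mu : Fin n → ℝ) (hmu : Function.Injective mu) :
    ∑ i, (lam i - mu i) * w lam mu i = ∑ i, (lam i - mu i) := by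
  rcases Nat.eq_zero_or_pos n with hn | hn
  · subst hn; simp
  have hcard : (univ : Finset (Fin n)).card = n := Finset.card_univ.trans (Fintype.card_fin n)
  set p : ℝ[X] := ∏ i, (X - C (lam i)) with hp
  set q : ℝ[X] := ∏ i, (X - C (mu i)) with hq
  have hpm : p.Monic := monic_prod_of_monic _ _ (fun i _ => monic_X_sub_C _)
  have hqm : q.Monic := monic_prod_of_monic _ _ (fun i _ => monic_X_sub_C _)
  have hpdeg : p.natDegree = n := by
    rw [hp, natDegree_prod_of_monic _ _ (fun i _ => monic_X_sub_C _)]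
    simp [natDegree_X_sub_C]
  have hqdeg : q.natDegree = n := by
    rw [hq, natDegree_prod_of_monic _ _ (fun i _ => monic_X_sub_C _)]
    simp [natDegree_X_sub_C]
  have hdegsub : (p - q).degree < (univ : Finset (Fin n)).card := by
    rw [hcard]
    have h1 : (p - q).degree < p.degree := by
      apply degree_sub_lt _ hpm.ne_zero (by rw [hpm.leadingCoeff, hqm.leadingCoeff])
      rw [degree_eq_natDegree hpm.ne_zero, degree_eq_natDegree hqm.ne_zero, hpdeg, hqdeg]
    calc (p - q).degree < p.degree := h1
      _ = (n : WithBot ℕ) := by rw [degree_eq_natDegree hpm.ne_zero, hpdeg]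
  have hinterp := Lagrange.eq_interpolate (f := p - q) hmu.injOn hdegsub
  -- take coefficient n - 1 of both sides
  have hco := congrArg (fun g : ℝ[X] => g.coeff (n - 1)) hinterp
  simp only [Lagrange.interpolate_apply, finset_sum_coeff, coeff_C_mul] at hco
  -- coeff of basis
  have hbasis : ∀ i : Fin n, (Lagrange.basis univ mu i).coeff (n - 1)
      = (∏ j ∈ univ.erase i, (mu i - mu j))⁻¹ := by
    intro i
    have hnd : (Lagrange.basis univ mu i).natDegree = n - 1 := by
      rw [Lagrange.natDegree_basis hmu.injOn (mem_univ i), hcard]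
    rw [← hnd, coeff_natDegree]
    unfold Lagrange.basis
    rw [leadingCoeff_prod]
    rw [← Finset.prod_inv_distrib]
    apply Finset.prod_congr rfl
    intro j hj
    have hne : mu i - mu j ≠ 0 :=
      sub_ne_zero_of_ne (fun hc => (Finset.mem_erase.mp hj).1 (hmu hc).symm)
    unfold Lagrange.basisDivisor
    rw [leadingCoeff_mul, leadingCoeff_C, (monic_X_sub_C (mu j)).leadingCoeff, mul_one]
  -- coeff of p - q
  have hcop : p.coeff (n - 1) = -∑ i, lam i := by
    have := Polynomial.prod_X_sub_C_coeff_card_pred (univ : Finset (Fin n)) lam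
      (by rw [hcard]; exact hn)
    rwa [hcard] at this
  have hcoq : q.coeff (n - 1) = -∑ i, mu i := by
    have := Polynomial.prod_X_sub_C_coeff_card_pred (univ : Finset (Fin n)) mu
      (by rw [hcard]; exact hn)
    rwa [hcard] at this
  have heval : ∀ i : Fin n, (p - q).eval (mu i) = ∏ j, (mu i - lam j) := by
    intro i
    rw [eval_sub, q_eval_zero, sub_zero, eval_prod_X_sub_C]
  rw [coeff_sub, hcop, hcoq] at hco
  -- now hco : ∑ i, (p-q).eval (mu i) * coeff basis = -∑ lam - -∑ mu
  have hco2 : ∑ i, (∏ j, (mu i - lam j)) * (∏ j ∈ univ.erase i, (mu i - mu j))⁻¹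
      = ∑ i, (mu i - lam i) := by
    have : ∑ i, (∏ j, (mu i - lam j)) * (∏ j ∈ univ.erase i, (mu i - mu j))⁻¹
        = ∑ i, (p - q).eval (mu i) * (Lagrange.basis univ mu i).coeff (n - 1) := by
      apply Finset.sum_congr rfl
      intro i _
      rw [heval i, hbasis i]
    rw [this, ← hco, Finset.sum_sub_distrib]
    ring
  -- finally rewrite dᵢ wᵢ
  have hterm : ∀ i : Fin n, (lam i - mu i) * w lam mu i
      = -((∏ j, (mu i - lam j)) * (∏ j ∈ univ.erase i, (mu i - mu j))⁻¹) := by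
    intro i
    have hden : ∀ j ∈ univ.erase i, mu i - mu j ≠ 0 := by
      intro j hj
      have : j ≠ i := (Finset.mem_erase.mp hj).1
      exact sub_ne_zero_of_ne (fun hc => this (hmu hc.symm))
    have hdenne : (∏ j ∈ univ.erase i, (mu i - mu j)) ≠ 0 := Finset.prod_ne_zero_iff.mpr hden
    have hw : w lam mu i = (∏ j ∈ univ.erase i, (mu i - lam j))
        * (∏ j ∈ univ.erase i, (mu i - mu j))⁻¹ := by
      unfold w
      rw [Finset.prod_div_distrib, div_eq_mul_inv]
    have hsplit : (∏ j, (mu i - lam j))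
        = (mu i - lam i) * ∏ j ∈ univ.erase i, (mu i - lam j) :=
      (Finset.mul_prod_erase univ _ (mem_univ i)).symm
    rw [hw, hsplit]
    ring
  calc ∑ i, (lam i - mu i) * w lam mu i
      = ∑ i, -((∏ j, (mu i - lam j)) * (∏ j ∈ univ.erase i, (mu i - mu j))⁻¹) :=
        Finset.sum_congr rfl (fun i _ => hterm i)
    _ = -∑ i, (∏ j, (mu i - lam j)) * (∏ j ∈ univ.erase i, (mu i - mu j))⁻¹ := by
        rw [Finset.sum_neg_distrib]
    _ = -∑ i, (mu i - lam i) := by rw [hco2]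
    _ = ∑ i, (lam i - mu i) := by
        rw [← Finset.sum_neg_distrib]
        exact Finset.sum_congr rfl (fun i _ => by ring)

/-- The transfer move. -/
lemma move_step (lam mu : Fin n → ℝ)
    (h1 : H1 lam mu)
    (h2 : ∀ j : ℕ, 0 ≤ P (fun i => lam i - mu i) j)
    (h3 : (∑ i, (lam i - mu i)) = 0)
    (k : ℕ) (hB : ∃ l : Fin n, k ≤ (l : ℕ) ∧ mu l < lam l) :
    ∃ (lam' : Fin n → ℝ) (κ : Fin n → ℝ),
      H1 lam' mu ∧
      (∀ j : ℕ, 0 ≤ P (fun i => lam' i - mu i) j) ∧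
      ((∑ i, (lam' i - mu i)) = 0) ∧
      (univ.filter (fun i : Fin n => lam' i ≠ mu i)).card + 1
        ≤ (univ.filter (fun i : Fin n => lam i ≠ mu i)).card ∧
      (∀ i : Fin n, (i : ℕ) < k → lam' i = lam i) ∧
      (∀ i : Fin n, (i : ℕ) < k → w lam mu i = w lam' mu i * κ i) ∧
      (∀ i : Fin n, (i : ℕ) < k → 0 < κ i) ∧
      (∀ i j : Fin n, i ≤ j → (j : ℕ) < k → κ j ≤ κ i) ∧
      (∀ i j : Fin n, i < j → (j : ℕ) < k → κ j < κ i) ∧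
      k ≤ n := by
  classical
  set d : Fin n → ℝ := fun i => lam i - mu i with hd
  -- the last index with d > 0 (among those ≥ k)
  set S₁ : Finset (Fin n) := univ.filter (fun l : Fin n => k ≤ (l : ℕ) ∧ mu l < lam l) with hS₁
  have hS₁ne : S₁.Nonempty := by
    obtain ⟨l, hl1, hl2⟩ := hB
    exact ⟨l, by simp [hS₁, hl1, hl2]⟩
  set r : Fin n := S₁.max' hS₁ne with hr
  have hrmem : r ∈ S₁ := S₁.max'_mem hS₁ne
  have hrk : k ≤ (r : ℕ) := by
    have := Finset.mem_filter.mp hrmem; exact this.2.1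
  have hrd : mu r < lam r := by
    have := Finset.mem_filter.mp hrmem; exact this.2.2
  have hrlast : ∀ l : Fin n, r < l → lam l ≤ mu l := by
    intro l hl
    by_contra hcon
    push_neg at hcon
    have : l ∈ S₁ := by
      refine Finset.mem_filter.mpr ⟨mem_univ l, ⟨?_, hcon⟩⟩
      exact le_trans hrk (le_of_lt hl)
    exact absurd (S₁.le_max' l this) (not_le.mpr hl)
  -- the last index with d < 0
  set S₂ : Finset (Fin n) := univ.filter (fun l : Fin n => lam l < mu l) with hS₂
  have hS₂ne : S₂.Nonempty := by
    by_contra hcon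
    rw [Finset.not_nonempty_iff_eq_empty] at hcon
    have hnonneg : ∀ i ∈ (univ : Finset (Fin n)), 0 ≤ d i := by
      intro i _
      by_contra hneg
      push_neg at hneg
      have : i ∈ S₂ := Finset.mem_filter.mpr ⟨mem_univ i, by simp [hd] at hneg; linarith⟩
      simp [hcon] at this
    have hall := (Finset.sum_eq_zero_iff_of_nonneg hnonneg).mp h3
    have := hall r (mem_univ r)
    simp only [hd] at this
    linarith
  set l₀ : Fin n := S₂.max' hS₂ne with hl₀
  have hl₀mem : l₀ ∈ S₂ := S₂.max'_mem hS₂ne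
  have hl₀d : lam l₀ < mu l₀ := (Finset.mem_filter.mp hl₀mem).2
  have hl₀last : ∀ l : Fin n, l₀ < l → mu l ≤ lam l := by
    intro l hl
    by_contra hcon
    push_neg at hcon
    have : l ∈ S₂ := Finset.mem_filter.mpr ⟨mem_univ l, hcon⟩
    exact absurd (S₂.le_max' l this) (not_le.mpr hl)
  -- r < l₀
  have hrl₀ : r < l₀ := by
    by_contra hcon
    push_neg at hcon  -- l₀ ≤ r
    have hzero : ∀ l : Fin n, r < l → d l = 0 := by
      intro l hl
      have h1' := hrlast l hl
      have h2' := hl₀last l (lt_of_le_of_lt hcon hl)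
      simp only [hd]; linarith
    have hsplit := Finset.sum_filter_add_sum_filter_not univ
      (fun i : Fin n => (i : ℕ) < (r : ℕ) + 1) d
    rw [h3] at hsplit
    have htail : ∑ i ∈ univ.filter (fun i : Fin n => ¬ ((i : ℕ) < (r : ℕ) + 1)), d i = 0 := by
      apply Finset.sum_eq_zero
      intro i hi
      have : ¬ ((i : ℕ) < (r : ℕ) + 1) := (Finset.mem_filter.mp hi).2
      exact hzero i (by omega)
    rw [htail] at hsplit
    have hprefix : P d ((r : ℕ) + 1) = 0 := by
      simpa [P] using hsplit
    -- but P d (r+1) = P d r + d r ≥ d r > 0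
    have hstep : P d ((r : ℕ) + 1) = P d (r : ℕ) + d r := by
      have := sum_filter_succ d (r : ℕ) r.isLt
      simpa [P, Fin.eta] using this
    have := h2 (r : ℕ)
    have hdr : 0 < d r := by simp only [hd]; linarith
    rw [hstep] at hprefix
    linarith
  -- the transfer amount
  set t : ℝ := min (lam r - mu r) (mu l₀ - lam l₀) with htdef
  have ht : 0 < t := lt_min (by linarith) (by linarith)
  have htr : t ≤ lam r - mu r := min_le_left _ _
  have htl : t ≤ mu l₀ - lam l₀ := min_le_right _ _
  have hrne : r ≠ l₀ := ne_of_lt hrl₀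
  set lam' : Fin n → ℝ :=
    Function.update (Function.update lam r (lam r - t)) l₀ (lam l₀ + t) with hlam'
  have hlam'r : lam' r = lam r - t := by
    rw [hlam', Function.update_of_ne hrne, Function.update_self]
  have hlam'l₀ : lam' l₀ = lam l₀ + t := by
    rw [hlam', Function.update_self]
  have hlam'other : ∀ i : Fin n, i ≠ r → i ≠ l₀ → lam' i = lam i := by
    intro i hir hil
    rw [hlam', Function.update_of_ne hil, Function.update_of_ne hir]
  -- bracket shrinking
  have hbracket : ∀ i : Fin n,
      min (lam i) (mu i) ≤ min (lam' i) (mu i) ∧ max (lam' i) (mu i) ≤ max (lam i) (mu i) := by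
    intro i
    by_cases hir : i = r
    · rw [hir, hlam'r]
      constructor
      · apply le_min _ (min_le_right _ _)
        have := min_le_right (lam r) (mu r)
        linarith
      · apply max_le _ (le_max_right _ _)
        have := le_max_left (lam r) (mu r)
        linarith
    by_cases hil : i = l₀
    · rw [hil, hlam'l₀]
      constructor
      · apply le_min _ (min_le_right _ _)
        have := min_le_left (lam l₀) (mu l₀)
        linarith
      · apply max_le _ (le_max_right _ _)
        have := le_max_right (lam l₀) (mu l₀)
        linarith
    · rw [hlam'other i hir hil]
      exact ⟨le_refl _, le_refl _⟩
  have h1' : H1 lam' mu := by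
    intro i j hij
    calc max (lam' j) (mu j) ≤ max (lam j) (mu j) := (hbracket j).2
      _ < min (lam i) (mu i) := h1 i j hij
      _ ≤ min (lam' i) (mu i) := (hbracket i).1
  -- prefix sums change
  have hgsum : ∀ s : Finset (Fin n),
      ∑ i ∈ s, (lam' i - lam i)
        = (if r ∈ s then -t else 0) + (if l₀ ∈ s then t else 0) := by
    intro s
    have hfun : ∀ i : Fin n, lam' i - lam i
        = (if i = r then -t else 0) + (if i = l₀ then t else 0) := by
      intro i
      by_cases hir : i = r
      · rw [hir, hlam'r]; simp [hrne]
      by_cases hil : i = l₀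
      · rw [hil, hlam'l₀]; simp [Ne.symm hrne]
      · rw [hlam'other i hir hil]; simp [hir, hil]
    rw [Finset.sum_congr rfl (fun i _ => hfun i), Finset.sum_add_distrib,
      Finset.sum_ite_eq' s r (fun _ => -t), Finset.sum_ite_eq' s l₀ (fun _ => t)]
  have hPdiff : ∀ j : ℕ, P (fun i => lam' i - mu i) j
      = P d j + ((if (r : ℕ) < j then -t else 0) + (if (l₀ : ℕ) < j then t else 0)) := by
    intro j
    have : P (fun i => lam' i - mu i) j = P d j
        + ∑ i ∈ univ.filter (fun i : Fin n => (i : ℕ) < j), (lam' i - lam i) := by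
      simp only [P, hd, ← Finset.sum_add_distrib]
      apply Finset.sum_congr rfl
      intro i _
      ring
    rw [this, hgsum]
    congr 2
    · simp [Finset.mem_filter]
    · simp [Finset.mem_filter]
  -- the key lower bound on middle prefix sums
  have hPmid : ∀ j : ℕ, (r : ℕ) < j → ¬ ((l₀ : ℕ) < j) → t ≤ P d j := by
    intro j hrj hl₀j
    push_neg at hl₀j
    have hsplit := Finset.sum_filter_add_sum_filter_not univ
      (fun i : Fin n => (i : ℕ) < j) d
    rw [h3] at hsplit
    have hneg : ∑ i ∈ univ.filter (fun i : Fin n => ¬ ((i : ℕ) < j)), (- d i)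
        = - ∑ i ∈ univ.filter (fun i : Fin n => ¬ ((i : ℕ) < j)), d i := by
      rw [Finset.sum_neg_distrib]
    have hPj : P d j = ∑ i ∈ univ.filter (fun i : Fin n => ¬ ((i : ℕ) < j)), (- d i) := by
      simp only [P]
      linarith [hsplit, hneg]
    rw [hPj]
    have hl₀mem' : l₀ ∈ univ.filter (fun i : Fin n => ¬ ((i : ℕ) < j)) := by
      simp only [mem_filter, mem_univ, true_and, not_lt]
      exact hl₀j
    have hsingle : - d l₀ ≤ ∑ i ∈ univ.filter (fun i : Fin n => ¬ ((i : ℕ) < j)), (- d i) := by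
      refine Finset.single_le_sum (f := fun i : Fin n => - d i) ?_ hl₀mem'
      intro i hi
      have hij : ¬ ((i : ℕ) < j) := (Finset.mem_filter.mp hi).2
      have hri : r < i := by
        rw [Fin.lt_def]
        omega
      have := hrlast i hri
      simp only [hd]
      linarith
    have hd0 : - d l₀ = mu l₀ - lam l₀ := by simp [hd]
    linarith
  have h2' : ∀ j : ℕ, 0 ≤ P (fun i => lam' i - mu i) j := by
    intro j
    rw [hPdiff j]
    by_cases hrj : (r : ℕ) < j
    · by_cases hlj : (l₀ : ℕ) < j
      · simp only [if_pos hrj, if_pos hlj]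
        have := h2 j
        linarith
      · simp only [if_pos hrj, if_neg hlj]
        have := hPmid j hrj hlj
        linarith
    · have hlj : ¬ ((l₀ : ℕ) < j) := by
        have : (r : ℕ) < (l₀ : ℕ) := hrl₀
        omega
      simp only [if_neg hrj, if_neg hlj]
      have := h2 j
      linarith
  have h3' : (∑ i, (lam' i - mu i)) = 0 := by
    have : (∑ i, (lam' i - mu i)) = (∑ i, d i) + ∑ i, (lam' i - lam i) := by
      rw [← Finset.sum_add_distrib]
      apply Finset.sum_congr rfl
      intro i _
      simp only [hd]; ring
    rw [this, h3, hgsum]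
    simp
  -- cardinality decrease
  have hcard' : (univ.filter (fun i : Fin n => lam' i ≠ mu i)).card + 1
      ≤ (univ.filter (fun i : Fin n => lam i ≠ mu i)).card := by
    rcases min_cases (lam r - mu r) (mu l₀ - lam l₀) with ⟨heq, _⟩ | ⟨heq, _⟩
    · -- t = lam r - mu r, so lam' r = mu r
      have hrzero : lam' r = mu r := by rw [hlam'r, htdef, heq]; ring
      have hsub : univ.filter (fun i : Fin n => lam' i ≠ mu i)
          ⊆ (univ.filter (fun i : Fin n => lam i ≠ mu i)).erase r := by
        intro i hi
        have hi' : lam' i ≠ mu i := (Finset.mem_filter.mp hi).2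
        have hir : i ≠ r := by
          intro hc; rw [hc, hrzero] at hi'; exact hi' rfl
        refine Finset.mem_erase.mpr ⟨hir, Finset.mem_filter.mpr ⟨mem_univ i, ?_⟩⟩
        by_cases hil : i = l₀
        · rw [hil]; exact ne_of_lt hl₀d
        · rw [← hlam'other i hir hil]; exact hi'
      have hrmem' : r ∈ univ.filter (fun i : Fin n => lam i ≠ mu i) := by
        simp [ne_of_gt hrd]
      calc (univ.filter (fun i : Fin n => lam' i ≠ mu i)).card + 1
          ≤ ((univ.filter (fun i : Fin n => lam i ≠ mu i)).erase r).card + 1 :=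
            by exact Nat.add_le_add_right (Finset.card_le_card hsub) 1
        _ = (univ.filter (fun i : Fin n => lam i ≠ mu i)).card := by
            rw [Finset.card_erase_of_mem hrmem']
            have : 0 < (univ.filter (fun i : Fin n => lam i ≠ mu i)).card :=
              Finset.card_pos.mpr ⟨r, hrmem'⟩
            omega
    · -- t = mu l₀ - lam l₀, so lam' l₀ = mu l₀
      have hlzero : lam' l₀ = mu l₀ := by rw [hlam'l₀, htdef, heq]; ring
      have hsub : univ.filter (fun i : Fin n => lam' i ≠ mu i)
          ⊆ (univ.filter (fun i : Fin n => lam i ≠ mu i)).erase l₀ := by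
        intro i hi
        have hi' : lam' i ≠ mu i := (Finset.mem_filter.mp hi).2
        have hil : i ≠ l₀ := by
          intro hc; rw [hc, hlzero] at hi'; exact hi' rfl
        refine Finset.mem_erase.mpr ⟨hil, Finset.mem_filter.mpr ⟨mem_univ i, ?_⟩⟩
        by_cases hir : i = r
        · rw [hir]; exact ne_of_gt hrd
        · rw [← hlam'other i hir hil]; exact hi'
      have hlmem' : l₀ ∈ univ.filter (fun i : Fin n => lam i ≠ mu i) := by
        simp [ne_of_lt hl₀d]
      calc (univ.filter (fun i : Fin n => lam' i ≠ mu i)).card + 1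
          ≤ ((univ.filter (fun i : Fin n => lam i ≠ mu i)).erase l₀).card + 1 :=
            by exact Nat.add_le_add_right (Finset.card_le_card hsub) 1
        _ = (univ.filter (fun i : Fin n => lam i ≠ mu i)).card := by
            rw [Finset.card_erase_of_mem hlmem']
            have : 0 < (univ.filter (fun i : Fin n => lam i ≠ mu i)).card :=
              Finset.card_pos.mpr ⟨l₀, hlmem'⟩
            omega
  -- κ and its properties
  set b₁ : ℝ := lam r - t with hb₁
  set b₂ : ℝ := lam l₀ + t with hb₂
  set c : ℝ := t * (b₁ - b₂ + t) with hcdef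
  have hb₁b₂ : b₂ < b₁ := by
    have hmaxmin := h1 r l₀ hrl₀
    have h1le : mu l₀ ≤ max (lam l₀) (mu l₀) := le_max_right _ _
    have h2le : min (lam r) (mu r) ≤ mu r := min_le_right _ _
    simp only [hb₁, hb₂]
    linarith
  have hc : 0 < c := mul_pos ht (by linarith)
  set κ : Fin n → ℝ := fun i =>
    ((mu i - lam r) * (mu i - lam l₀)) / ((mu i - b₁) * (mu i - b₂)) with hκ
  -- facts for window indices
  have hwin : ∀ i : Fin n, (i : ℕ) < k →
      0 < mu i - lam r ∧ 0 < mu i - lam l₀ ∧ 0 < mu i - b₁ ∧ 0 < mu i - b₂ := by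
    intro i hik
    have hir : i < r := by rw [Fin.lt_def]; omega
    have hil : i < l₀ := lt_trans hir hrl₀
    have e1 : 0 < mu i - lam r := h1.mu_sub_lam_pos hir
    have e2 : 0 < mu i - lam l₀ := h1.mu_sub_lam_pos hil
    have e3 : 0 < mu i - b₁ := by simp only [hb₁]; linarith
    have e4 : 0 < mu i - b₂ := by
      have := h1.mu_lt hil
      simp only [hb₂]
      linarith
    exact ⟨e1, e2, e3, e4⟩
  have hκpos : ∀ i : Fin n, (i : ℕ) < k → 0 < κ i := by
    intro i hik
    obtain ⟨e1, e2, e3, e4⟩ := hwin i hik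
    exact div_pos (mul_pos e1 e2) (mul_pos e3 e4)
  have hκeq : ∀ i : Fin n, (i : ℕ) < k →
      κ i = 1 - c / ((mu i - b₁) * (mu i - b₂)) := by
    intro i hik
    obtain ⟨e1, e2, e3, e4⟩ := hwin i hik
    rw [hκ]
    field_simp
    simp only [hcdef, hb₁, hb₂]
    ring
  have hQmono : ∀ i j : Fin n, i ≤ j → (j : ℕ) < k →
      (mu j - b₁) * (mu j - b₂) ≤ (mu i - b₁) * (mu i - b₂) := by
    intro i j hij hjk
    have hik : (i : ℕ) < k := lt_of_le_of_lt hij hjk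
    obtain ⟨_, _, e3i, e4i⟩ := hwin i hik
    obtain ⟨_, _, e3j, e4j⟩ := hwin j hjk
    have hmuji : mu j ≤ mu i := by
      rcases eq_or_lt_of_le hij with rfl | hlt
      · exact le_refl _
      · exact le_of_lt (h1.mu_lt hlt)
    apply mul_le_mul (by linarith) (by linarith) (le_of_lt e4j) (by linarith)
  have hκmono : ∀ i j : Fin n, i ≤ j → (j : ℕ) < k → κ j ≤ κ i := by
    intro i j hij hjk
    have hik : (i : ℕ) < k := lt_of_le_of_lt hij hjk
    rw [hκeq i hik, hκeq j hjk]
    obtain ⟨_, _, e3i, e4i⟩ := hwin i hik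
    obtain ⟨_, _, e3j, e4j⟩ := hwin j hjk
    have := hQmono i j hij hjk
    have h5 : c / ((mu i - b₁) * (mu i - b₂)) ≤ c / ((mu j - b₁) * (mu j - b₂)) :=
      div_le_div_of_nonneg_left (le_of_lt hc) (mul_pos e3j e4j) this
    linarith
  have hκstrict : ∀ i j : Fin n, i < j → (j : ℕ) < k → κ j < κ i := by
    intro i j hij hjk
    have hik : (i : ℕ) < k := lt_of_le_of_lt (le_of_lt hij) hjk
    rw [hκeq i hik, hκeq j hjk]
    obtain ⟨_, _, e3i, e4i⟩ := hwin i hik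
    obtain ⟨_, _, e3j, e4j⟩ := hwin j hjk
    have hmuji : mu j < mu i := h1.mu_lt hij
    have hQ : (mu j - b₁) * (mu j - b₂) < (mu i - b₁) * (mu i - b₂) := by
      apply mul_lt_mul' (by linarith) (by linarith) (le_of_lt e4j) (by linarith)
    have h5 : c / ((mu i - b₁) * (mu i - b₂)) < c / ((mu j - b₁) * (mu j - b₂)) :=
      div_lt_div_of_pos_left hc (mul_pos e3j e4j) hQ
    linarith
  -- w relation
  have hwrel : ∀ i : Fin n, (i : ℕ) < k → w lam mu i = w lam' mu i * κ i := by
    intro i hik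
    have hir : i < r := by rw [Fin.lt_def]; omega
    have hil : i < l₀ := lt_trans hir hrl₀
    have hirne : i ≠ r := ne_of_lt hir
    have hilne : i ≠ l₀ := ne_of_lt hil
    obtain ⟨e1, e2, e3, e4⟩ := hwin i hik
    have hrmem₂ : r ∈ univ.erase i := Finset.mem_erase.mpr ⟨(ne_of_lt hir).symm, mem_univ r⟩
    have hlmem₂ : l₀ ∈ (univ.erase i).erase r :=
      Finset.mem_erase.mpr ⟨hrne.symm, Finset.mem_erase.mpr ⟨(ne_of_lt hil).symm, mem_univ l₀⟩⟩
    set F : Fin n → ℝ := fun j => (mu i - lam j) / (mu i - mu j) with hF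
    set F' : Fin n → ℝ := fun j => (mu i - lam' j) / (mu i - mu j) with hF'
    have hsplit1 : w lam mu i = F r * (F l₀ * ∏ j ∈ ((univ.erase i).erase r).erase l₀, F j) := by
      rw [w, ← Finset.mul_prod_erase _ F hrmem₂, ← Finset.mul_prod_erase _ F hlmem₂]
    have hsplit2 : w lam' mu i
        = F' r * (F' l₀ * ∏ j ∈ ((univ.erase i).erase r).erase l₀, F' j) := by
      rw [w, ← Finset.mul_prod_erase _ F' hrmem₂, ← Finset.mul_prod_erase _ F' hlmem₂]
    have hrest : ∏ j ∈ ((univ.erase i).erase r).erase l₀, F' j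
        = ∏ j ∈ ((univ.erase i).erase r).erase l₀, F j := by
      apply Finset.prod_congr rfl
      intro j hj
      have hjl : j ≠ l₀ := (Finset.mem_erase.mp hj).1
      have hjr : j ≠ r := (Finset.mem_erase.mp (Finset.mem_erase.mp hj).2).1
      simp only [hF, hF', hlam'other j hjr hjl]
    have hdenr : mu i - mu r ≠ 0 := by
      have := h1.mu_lt hir; intro hc; linarith
    have hdenl : mu i - mu l₀ ≠ 0 := by
      have := h1.mu_lt hil; intro hc; linarith
    have hkey : F r * F l₀ = (F' r * F' l₀) * κ i := by
      simp only [hF, hF', hlam'r, hlam'l₀, hκ]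
      rw [div_mul_div_comm, div_mul_div_comm, div_mul_div_comm]
      rw [div_eq_div_iff (by exact mul_ne_zero hdenr hdenl)
        (by exact mul_ne_zero (mul_ne_zero hdenr hdenl) (ne_of_gt (mul_pos e3 e4)))]
      simp only [hb₁, hb₂]
      ring
    rw [hsplit1, hsplit2, hrest]
    calc F r * (F l₀ * ∏ j ∈ ((univ.erase i).erase r).erase l₀, F j)
        = (F r * F l₀) * ∏ j ∈ ((univ.erase i).erase r).erase l₀, F j := by ring
      _ = ((F' r * F' l₀) * κ i) * ∏ j ∈ ((univ.erase i).erase r).erase l₀, F j := by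
          rw [hkey]
      _ = F' r * (F' l₀ * ∏ j ∈ ((univ.erase i).erase r).erase l₀, F j) * κ i := by ring
  -- window values unchanged
  have hlamwin : ∀ i : Fin n, (i : ℕ) < k → lam' i = lam i := by
    intro i hik
    have hir : i < r := by rw [Fin.lt_def]; omega
    exact hlam'other i (ne_of_lt hir) (ne_of_lt (lt_trans hir hrl₀))
  have hkn : k ≤ n := le_trans hrk (le_of_lt r.isLt)
  exact ⟨lam', κ, h1', h2', h3', hcard', hlamwin, hwrel, hκpos, hκmono, hκstrict, hkn⟩


/-- Main induction: weak nonnegativity. -/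
lemma T_nonneg : ∀ (N : ℕ) (lam mu : Fin n → ℝ),
    (univ.filter (fun i : Fin n => lam i ≠ mu i)).card ≤ N →
    H1 lam mu →
    (∀ k : ℕ, 0 ≤ P (fun i => lam i - mu i) k) →
    ((∑ i, (lam i - mu i)) = 0) →
    ∀ k : ℕ, 0 ≤ T lam mu k := by
  intro N
  induction N with
  | zero =>
    intro lam mu hcard h1 h2 h3 k
    have hempty : (univ.filter (fun i : Fin n => lam i ≠ mu i)) = ∅ :=
      Finset.card_eq_zero.mp (Nat.le_zero.mp hcard)
    have heq : ∀ i : Fin n, lam i = mu i := by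
      intro i
      by_contra hne
      have : i ∈ univ.filter (fun i : Fin n => lam i ≠ mu i) := by
        simp [hne]
      rw [hempty] at this
      exact absurd this (Finset.notMem_empty i)
    have : T lam mu k = 0 := by
      apply Finset.sum_eq_zero
      intro i _
      rw [heq i]
      ring
    linarith
  | succ N ih =>
    intro lam mu hcard h1 h2 h3 k
    by_cases hB : ∃ l : Fin n, k ≤ (l : ℕ) ∧ mu l < lam l
    · obtain ⟨lam', κ, h1', h2', h3', hcard', hlamwin, hwrel, hκpos, hκmono, hκstrict, hkn⟩ :=
        move_step lam mu h1 h2 h3 k hB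
      have ihT : ∀ j : ℕ, 0 ≤ T lam' mu j := by
        apply ih lam' mu (by omega) h1' h2' h3'
      have hTeq : T lam mu k = ∑ i ∈ univ.filter (fun i : Fin n => (i : ℕ) < k),
          ((lam' i - mu i) * w lam' mu i) * κ i := by
        apply Finset.sum_congr rfl
        intro i hi
        have hik : (i : ℕ) < k := (Finset.mem_filter.mp hi).2
        rw [hwrel i hik, hlamwin i hik]
        ring
      rw [hTeq]
      have := abel_ge (fun i => (lam' i - mu i) * w lam' mu i) κ k hkn
        (fun j _ => ihT j) hκmono 0 (le_refl 0) (fun i hi => le_of_lt (hκpos i hi))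
      simpa using this
    · push_neg at hB
      have hmuinj : Function.Injective mu := (H1.mu_anti h1).injective
      have hid := sum_dw_eq_sum_d lam mu hmuinj
      rw [h3] at hid
      have hsplit := Finset.sum_filter_add_sum_filter_not univ
        (fun i : Fin n => (i : ℕ) < k) (fun i => (lam i - mu i) * w lam mu i)
      rw [hid] at hsplit
      have htail : ∑ i ∈ univ.filter (fun i : Fin n => ¬ ((i : ℕ) < k)),
          (lam i - mu i) * w lam mu i ≤ 0 := by
        apply Finset.sum_nonpos
        intro i hi
        have hik : k ≤ (i : ℕ) := not_lt.mp (Finset.mem_filter.mp hi).2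
        have hle : lam i ≤ mu i := hB i hik
        have hw := w_pos h1 i
        nlinarith
      simp only [T]
      linarith
/-- Strict positivity. -/
lemma T_pos (lam mu : Fin n → ℝ)
    (h1 : H1 lam mu)
    (h2 : ∀ k : ℕ, 0 ≤ P (fun i => lam i - mu i) k)
    (h3 : (∑ i, (lam i - mu i)) = 0)
    (hd : ∀ i, lam i ≠ mu i) (k : ℕ) (hk1 : 1 ≤ k) (hkn : k < n) :
    0 < T lam mu k := by
  have hn2 : 2 ≤ n := by omega
  have h0n : 0 < n := by omega
  have hd0pos : 0 < lam ⟨0, h0n⟩ - mu ⟨0, h0n⟩ := by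
    have hP1 : P (fun i => lam i - mu i) 1 = lam ⟨0, h0n⟩ - mu ⟨0, h0n⟩ := by
      have := sum_filter_succ (fun i => lam i - mu i) 0 h0n
      simpa [P] using this
    have := h2 1
    rw [hP1] at this
    rcases lt_or_eq_of_le this with h | h
    · exact h
    · exact absurd (by linarith : lam ⟨0, h0n⟩ = mu ⟨0, h0n⟩) (hd ⟨0, h0n⟩)
  rcases Nat.lt_or_ge k 2 with hk2 | hk2
  · -- k = 1
    have hk : k = 1 := by omega
    subst hk
    have hT1 : T lam mu 1 = (lam ⟨0, h0n⟩ - mu ⟨0, h0n⟩) * w lam mu ⟨0, h0n⟩ := by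
      have := sum_filter_succ (fun i => (lam i - mu i) * w lam mu i) 0 h0n
      simpa [T] using this
    rw [hT1]
    exact mul_pos hd0pos (w_pos h1 ⟨0, h0n⟩)
  · -- k ≥ 2
    by_cases hB : ∃ l : Fin n, k ≤ (l : ℕ) ∧ mu l < lam l
    · obtain ⟨lam', κ, h1', h2', h3', hcard', hlamwin, hwrel, hκpos, hκmono, hκstrict, hkn'⟩ :=
        move_step lam mu h1 h2 h3 k hB
      have ihT : ∀ j : ℕ, 0 ≤ T lam' mu j :=
        T_nonneg ((univ.filter (fun i : Fin n => lam' i ≠ mu i)).card) lam' mu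
          (le_refl _) h1' h2' h3'
      have hTeq : T lam mu k = ∑ i ∈ univ.filter (fun i : Fin n => (i : ℕ) < k),
          ((lam' i - mu i) * w lam' mu i) * κ i := by
        apply Finset.sum_congr rfl
        intro i hi
        have hik : (i : ℕ) < k := (Finset.mem_filter.mp hi).2
        rw [hwrel i hik, ← hlamwin i hik]
        ring
      set a : Fin n → ℝ := fun i => (lam' i - mu i) * w lam' mu i with ha
      set I0 : Fin n := ⟨0, h0n⟩ with hI0
      have h1n : 1 < n := by omega
      set I1 : Fin n := ⟨1, h1n⟩ with hI1
      have hI0k : (I0 : ℕ) < k := by simp [hI0]; omega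
      have hI1k : (I1 : ℕ) < k := by simp [hI1]; omega
      set κ' : Fin n → ℝ := fun i => if (i : ℕ) = 0 then κ I1 else κ i with hκ'
      have hsplit : ∑ i ∈ univ.filter (fun i : Fin n => (i : ℕ) < k), a i * κ i
          = a I0 * (κ I0 - κ I1)
            + ∑ i ∈ univ.filter (fun i : Fin n => (i : ℕ) < k), a i * κ' i := by
        have hdiff : ∑ i ∈ univ.filter (fun i : Fin n => (i : ℕ) < k),
            (a i * κ i - a i * κ' i) = a I0 * (κ I0 - κ I1) := by
          rw [Finset.sum_eq_single_of_mem I0 (by simp [hI0]; omega)]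
          · have : κ' I0 = κ I1 := by simp [hκ', hI0]
            rw [this]
            ring
          · intro j _ hjne
            have : (j : ℕ) ≠ 0 := by
              intro hc
              exact hjne (Fin.ext (by simp [hI0, hc]))
            have : κ' j = κ j := by simp [hκ', this]
            rw [this]
            ring
        have := Finset.sum_sub_distrib (s := univ.filter (fun i : Fin n => (i : ℕ) < k))
          (f := fun i => a i * κ i) (g := fun i => a i * κ' i)
        rw [this] at hdiff
        linarith
      have habel : 0 ≤ ∑ i ∈ univ.filter (fun i : Fin n => (i : ℕ) < k), a i * κ' i := by
        have hmono' : ∀ i j : Fin n, i ≤ j → (j : ℕ) < k → κ' j ≤ κ' i := by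
          intro i j hij hjk
          have hik : (i : ℕ) < k := lt_of_le_of_lt hij hjk
          by_cases hj0 : (j : ℕ) = 0
          · have hi0 : (i : ℕ) = 0 := by omega
            simp [hκ', hj0, hi0]
          · by_cases hi0 : (i : ℕ) = 0
            · simp only [hκ', hj0, hi0, if_true, if_false, ite_true, ite_false]
              apply hκmono I1 j _ hjk
              rw [Fin.le_def]
              simp [hI1]
              omega
            · simp only [hκ', if_neg hi0, if_neg hj0]
              exact hκmono i j hij hjk
        have hpos' : ∀ i : Fin n, (i : ℕ) < k → 0 ≤ κ' i := by
          intro i hik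
          by_cases hi0 : (i : ℕ) = 0
          · simp only [hκ', if_pos hi0]
            exact le_of_lt (hκpos I1 hI1k)
          · simp only [hκ', if_neg hi0]
            exact le_of_lt (hκpos i hik)
        have := abel_ge a κ' k hkn' (fun j _ => ihT j) hmono' 0 (le_refl 0) hpos'
        simpa using this
      have ha0 : 0 < a I0 := by
        rw [ha]
        have : lam' I0 = lam I0 := hlamwin I0 hI0k
        simp only [this]
        exact mul_pos hd0pos (w_pos h1' I0)
      have hκdiff : 0 < κ I0 - κ I1 := by
        have := hκstrict I0 I1 (by rw [Fin.lt_def]; simp [hI0, hI1]) hI1k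
        linarith
      rw [hTeq, hsplit]
      have := mul_pos ha0 hκdiff
      linarith
    · push_neg at hB
      have hmuinj : Function.Injective mu := (H1.mu_anti h1).injective
      have hid := sum_dw_eq_sum_d lam mu hmuinj
      rw [h3] at hid
      have hsplit := Finset.sum_filter_add_sum_filter_not univ
        (fun i : Fin n => (i : ℕ) < k) (fun i => (lam i - mu i) * w lam mu i)
      rw [hid] at hsplit
      set L : Fin n := ⟨n - 1, by omega⟩ with hL
      have hLmem : L ∈ univ.filter (fun i : Fin n => ¬ ((i : ℕ) < k)) := by
        simp only [mem_filter, mem_univ, true_and, not_lt]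
        have : (L : ℕ) = n - 1 := rfl
        omega
      have htail : ∑ i ∈ univ.filter (fun i : Fin n => ¬ ((i : ℕ) < k)),
          (lam i - mu i) * w lam mu i < 0 := by
        have h0 : 0 < ∑ i ∈ univ.filter (fun i : Fin n => ¬ ((i : ℕ) < k)),
            (-(lam i - mu i)) * w lam mu i := by
          apply Finset.sum_pos'
          · intro i hi
            have hik : k ≤ (i : ℕ) := not_lt.mp (Finset.mem_filter.mp hi).2
            have hle : lam i ≤ mu i := hB i hik
            have hw := w_pos h1 i
            nlinarith
          · refine ⟨L, hLmem, ?_⟩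
            have hik : k ≤ (L : ℕ) := not_lt.mp (Finset.mem_filter.mp hLmem).2
            have hle : lam L ≤ mu L := hB L hik
            have hlt : lam L < mu L := lt_of_le_of_ne hle (hd L)
            have hw := w_pos h1 L
            nlinarith
        have : ∑ i ∈ univ.filter (fun i : Fin n => ¬ ((i : ℕ) < k)),
            (-(lam i - mu i)) * w lam mu i
            = - ∑ i ∈ univ.filter (fun i : Fin n => ¬ ((i : ℕ) < k)),
              (lam i - mu i) * w lam mu i := by
          rw [← Finset.sum_neg_distrib]
          apply Finset.sum_congr rfl
          intro i _
          ring
        rw [this] at h0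
        linarith
      simp only [T]
      linarith

lemma derivative_prod_X_sub_C (mu : Fin n → ℝ) (s : Finset (Fin n)) :
    Polynomial.derivative (∏ j ∈ s, (X - C (mu j)))
      = ∑ i ∈ s, ∏ j ∈ s.erase i, (X - C (mu j)) := by
  classical
  induction s using Finset.induction_on with
  | empty => simp
  | @insert a s ha ih =>
    rw [Finset.prod_insert ha, derivative_mul, ih, Finset.sum_insert ha,
      Finset.erase_insert ha, Finset.mul_sum]
    have hd : Polynomial.derivative (X - C (mu a)) = 1 := by
      simp
    rw [hd, one_mul]
    congr 1
    apply Finset.sum_congr rfl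
    intro i hi
    have hia : i ≠ a := by rintro rfl; exact ha hi
    have hrw : (insert a s).erase i = insert a (s.erase i) := by
      rw [Finset.erase_insert_of_ne hia.symm]
    rw [hrw, Finset.prod_insert (by simp [ha, Finset.mem_erase])]

lemma eval_derivative_q (mu : Fin n → ℝ) (m : Fin n) :
    (Polynomial.derivative (∏ j, (X - C (mu j)))).eval (mu m)
      = ∏ j ∈ univ.erase m, (mu m - mu j) := by
  rw [derivative_prod_X_sub_C mu univ]
  rw [Polynomial.eval_finset_sum]
  rw [Finset.sum_eq_single_of_mem m (mem_univ m)]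
  · rw [Polynomial.eval_prod]
    apply Finset.prod_congr rfl
    intro j _
    simp
  · intro b _ hbm
    have hm : m ∈ univ.erase b := Finset.mem_erase.mpr ⟨hbm.symm, mem_univ m⟩
    rw [Polynomial.eval_prod]
    apply Finset.prod_eq_zero hm
    simp

end NCM

theorem necessary_condition_for_majorization
    (n : ℕ) (lam mu : Fin n → ℝ)
    (hlam : StrictAnti lam) (hmu : StrictAnti mu)
    (hdistinct : ∀ i, lam i ≠ mu i)
    (hinterlacer : ∀ i j : Fin n, i < j → max (lam j) (mu j) < min (lam i) (mu i))
    (p q : Polynomial ℝ)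
    (hp : p = ∏ i, (X - C (lam i)))
    (hq : q = ∏ i, (X - C (mu i)))
    (hmaj : ∀ k ≤ n,
      ∑ i ∈ univ.filter (fun i : Fin n => (i : ℕ) < k), mu i ≤
        ∑ i ∈ univ.filter (fun i : Fin n => (i : ℕ) < k), lam i)
    (htot : ∑ i, lam i = ∑ i, mu i) :
    ∀ k, 1 ≤ k → k < n →
      ∑ i ∈ univ.filter (fun i : Fin n => (i : ℕ) < k),
        p.eval (mu i) / (Polynomial.derivative q).eval (mu i) < 0 := by
  intro k hk1 hkn
  have h1 : NCM.H1 lam mu := hinterlacer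
  have h2 : ∀ j : ℕ, 0 ≤ NCM.P (fun i => lam i - mu i) j := by
    intro j
    by_cases hj : j ≤ n
    · have := hmaj j hj
      simp only [NCM.P, Finset.sum_sub_distrib]
      linarith
    · have hnj : n ≤ j := by omega
      simp only [NCM.P, NCM.filter_eq_univ_of_le j hnj, Finset.sum_sub_distrib]
      linarith
  have h3 : (∑ i, (lam i - mu i)) = 0 := by
    rw [Finset.sum_sub_distrib]
    linarith
  have hT := NCM.T_pos lam mu h1 h2 h3 hdistinct k hk1 hkn
  have hterm : ∀ i : Fin n,
      p.eval (mu i) / (Polynomial.derivative q).eval (mu i)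
        = -((lam i - mu i) * NCM.w lam mu i) := by
    intro i
    rw [hp, hq, NCM.eval_prod_X_sub_C, NCM.eval_derivative_q]
    have hden : ∀ j ∈ univ.erase i, mu i - mu j ≠ 0 := by
      intro j hj
      have : j ≠ i := (Finset.mem_erase.mp hj).1
      exact sub_ne_zero_of_ne (fun hc => this (hmu.injective hc.symm))
    have hdenne : (∏ j ∈ univ.erase i, (mu i - mu j)) ≠ 0 := Finset.prod_ne_zero_iff.mpr hden
    have hw : NCM.w lam mu i = (∏ j ∈ univ.erase i, (mu i - lam j))
        * (∏ j ∈ univ.erase i, (mu i - mu j))⁻¹ := by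
      unfold NCM.w
      rw [Finset.prod_div_distrib, div_eq_mul_inv]
    have hsplitp : (∏ j, (mu i - lam j))
        = (mu i - lam i) * ∏ j ∈ univ.erase i, (mu i - lam j) :=
      (Finset.mul_prod_erase univ _ (mem_univ i)).symm
    rw [hsplitp, hw, div_eq_mul_inv]
    ring
  have hsum : ∑ i ∈ univ.filter (fun i : Fin n => (i : ℕ) < k),
      p.eval (mu i) / (Polynomial.derivative q).eval (mu i) = - NCM.T lam mu k := by
    rw [show - NCM.T lam mu k = ∑ i ∈ univ.filter (fun i : Fin n => (i : ℕ) < k),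
      -((lam i - mu i) * NCM.w lam mu i) from by
        rw [Finset.sum_neg_distrib]; rfl]
    apply Finset.sum_congr rfl
    intro i _
    exact hterm i
  rw [hsum]
  linarith
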